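/- Define cubics s₀,s₁,s₂,s₃ in ℂ[u₀,u₁,u₂] depending on a parameter λ ∈ ℂ by: s₀ = -½(u₀-λu₁)(u₁-u₂)(u₂-λu₀), s₁ = (1-λ)u₀(u₁-u₂)(λu₁-u₂) - s₀, s₂ = (1-λ)u₁(u₂-u₀)(u₂-λu₀) - s₀, s₃ = (1-λ)u₂(u₀-u₁)(u₀-λu₁) - s₀. Then the polynomial identity (λ+1)²(s₁-s₀)(s₂-s₀)(s₃-s₀) = -2λ·s₀·(s₁+s₂+s₃-s₀)² holds in ℂ[u₀,u₁,u₂]. -/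
import Mathlib


open MvPolynomial

noncomputable section

/-- The cubic `s₀ = -½(u₀-λu₁)(u₁-u₂)(u₂-λu₀)`. -/
def s0 (l : ℂ) : MvPolynomial (Fin 3) ℂ :=
  -(C (1/2 : ℂ)) * (X 0 - C l * X 1) * (X 1 - X 2) * (X 2 - C l * X 0)

/-- The cubic `s₁ = (1-λ)u₀(u₁-u₂)(λu₁-u₂) - s₀`. -/
def s1 (l : ℂ) : MvPolynomial (Fin 3) ℂ :=
  C (1 - l) * X 0 * (X 1 - X 2) * (C l * X 1 - X 2) - s0 l

/-- The cubic `s₂ = (1-λ)u₁(u₂-u₀)(u₂-λu₀) - s₀`. -/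
def s2 (l : ℂ) : MvPolynomial (Fin 3) ℂ :=
  C (1 - l) * X 1 * (X 2 - X 0) * (X 2 - C l * X 0) - s0 l

/-- The cubic `s₃ = (1-λ)u₂(u₀-u₁)(u₀-λu₁) - s₀`. -/
def s3 (l : ℂ) : MvPolynomial (Fin 3) ℂ :=
  C (1 - l) * X 2 * (X 0 - X 1) * (X 0 - C l * X 1) - s0 l

/-- The identity `(λ+1)²(s₁-s₀)(s₂-s₀)(s₃-s₀) = -2λ·s₀·(s₁+s₂+s₃-s₀)²`
in `ℂ[u₀,u₁,u₂]`. -/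
theorem stmt10 (l : ℂ) :
    C ((l + 1) ^ 2) * (s1 l - s0 l) * (s2 l - s0 l) * (s3 l - s0 l) =
      -(C (2 * l)) * s0 l * (s1 l + s2 l + s3 l - s0 l) ^ 2 := by
  apply MvPolynomial.funext
  intro x
  simp only [s0, s1, s2, s3, map_add, map_sub, map_mul, map_neg, map_pow, eval_C, eval_X]
  ring
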